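/- Let 1 ≤ k ≤ n and ω ≥ 1 be integers and let I ⊆ {1,…,n} with |I| = k. For i₀ ∈ ℤ/nℤ define J_{i₀} := {1 + d(i₀,i) + n(r−1) : i ∈ I, 1 ≤ r ≤ ω}, where d(i₀,i) ∈ {0,1,…,n−1} denotes the residue of i₀ − i modulo n. Then each J_{i₀} is a subset of {1,…,ωn} of cardinality kω, and the tuple (J_{i₀})_{i₀ ∈ ℤ/nℤ} is a (k,n,ω) juggling pattern. -/
import Mathlib

private lemma icc_mod_inj {n a b : ℕ} (hn : 0 < n) (ha : a ∈ Finset.Icc 1 n)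
    (hb : b ∈ Finset.Icc 1 n) (h : a % n = b % n) : a = b := by
  simp only [Finset.mem_Icc] at ha hb
  have ha' : a % n = if a = n then 0 else a := by
    split
    · simp [*]
    · exact Nat.mod_eq_of_lt (by omega)
  have hb' : b % n = if b = n then 0 else b := by
    split
    · simp [*]
    · exact Nat.mod_eq_of_lt (by omega)
  rw [ha', hb'] at h
  split_ifs at h <;> omega

theorem fixed_point_of_component_is_juggling_pattern
    (n ω k : ℕ) [NeZero n] (hω : 1 ≤ ω) (hk : 1 ≤ k) (hkn : k ≤ n)
    (I : Finset ℕ) (hI : I ⊆ Finset.Icc 1 n) (hIcard : I.card = k)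
    (J : ZMod n → Finset ℕ)
    (hJ : ∀ i₀ : ZMod n, J i₀ =
      (I ×ˢ Finset.Icc 1 ω).image fun p =>
        1 + (i₀ - (p.1 : ZMod n)).val + n * (p.2 - 1)) :
    (∀ i₀ : ZMod n, J i₀ ⊆ Finset.Icc 1 (ω * n)) ∧
    (∀ i₀ : ZMod n, (J i₀).card = k * ω) ∧
    (∀ i₀ : ZMod n, ∀ j ∈ J i₀, j < ω * n → j + 1 ∈ J (i₀ + 1)) := by
  have hn : 0 < n := NeZero.pos n
  refine ⟨?_, ?_, ?_⟩
  · intro i₀ j hj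
    rw [hJ] at hj
    obtain ⟨⟨i, r⟩, hp, rfl⟩ := Finset.mem_image.mp hj
    obtain ⟨hi, hr⟩ := Finset.mem_product.mp hp
    obtain ⟨hr1, hr2⟩ := Finset.mem_Icc.mp hr
    have hv : (i₀ - (i : ZMod n)).val < n := ZMod.val_lt _
    have key : n * (r - 1) + n ≤ n * ω := by
      calc n * (r - 1) + n = n * (r - 1 + 1) := by ring
        _ ≤ n * ω := Nat.mul_le_mul_left n (by omega)
    have hωn : ω * n = n * ω := Nat.mul_comm ω n
    simp only [Finset.mem_Icc]
    refine ⟨by omega, ?_⟩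
    rw [hωn]
    omega
  · intro i₀
    rw [hJ, Finset.card_image_of_injOn, Finset.card_product, hIcard, Nat.card_Icc]
    · simp
    · rintro ⟨i, r⟩ hp ⟨i', r'⟩ hq h
      obtain ⟨hi, hr⟩ := Finset.mem_product.mp hp
      obtain ⟨hi', hr'⟩ := Finset.mem_product.mp hq
      simp only [Finset.mem_Icc] at hr hr'
      simp only at h
      have hv : (i₀ - (i : ZMod n)).val < n := ZMod.val_lt _
      have hv' : (i₀ - (i' : ZMod n)).val < n := ZMod.val_lt _
      have h1 : (i₀ - (i : ZMod n)).val = (i₀ - (i' : ZMod n)).val := by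
        have e0 : (i₀ - (i : ZMod n)).val + n * (r - 1)
            = (i₀ - (i' : ZMod n)).val + n * (r' - 1) := by omega
        have e1 : ((i₀ - (i : ZMod n)).val + n * (r - 1)) % n
            = ((i₀ - (i' : ZMod n)).val + n * (r' - 1)) % n := by rw [e0]
        rwa [Nat.add_mul_mod_self_left, Nat.add_mul_mod_self_left,
          Nat.mod_eq_of_lt hv, Nat.mod_eq_of_lt hv'] at e1
      have h2 : r = r' := by
        have e2 : n * (r - 1) = n * (r' - 1) := by omega
        have := Nat.eq_of_mul_eq_mul_left hn e2
        omega
      have h3 : i = i' := by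
        have hx : i₀ - (i : ZMod n) = i₀ - (i' : ZMod n) := ZMod.val_injective n h1
        have hc : (i : ZMod n) = (i' : ZMod n) := sub_right_injective hx
        have hmod : i % n = i' % n := (ZMod.natCast_eq_natCast_iff i i' n).mp hc
        exact icc_mod_inj hn (hI hi) (hI hi') hmod
      simp [h2, h3]
  · intro i₀ j hj hlt
    rw [hJ] at hj
    rw [hJ]
    obtain ⟨⟨i, r⟩, hp, rfl⟩ := Finset.mem_image.mp hj
    obtain ⟨hi, hr⟩ := Finset.mem_product.mp hp
    obtain ⟨hr1, hr2⟩ := Finset.mem_Icc.mp hr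
    set x := i₀ - (i : ZMod n) with hxdef
    have hv : x.val < n := ZMod.val_lt _
    have hx1 : i₀ + 1 - (i : ZMod n) = x + 1 := by rw [hxdef]; ring
    have hval : (x + 1).val = (x.val + 1) % n := by
      have hc : ((x.val : ℕ) : ZMod n) = x := by
        simp [ZMod.natCast_val, ZMod.cast_id]
      conv_lhs => rw [← hc, ← Nat.cast_one, ← Nat.cast_add]
      rw [ZMod.val_natCast]
    by_cases hcase : x.val + 1 < n
    · refine Finset.mem_image.mpr ⟨⟨i, r⟩, hp, ?_⟩
      simp only [hx1, hval, Nat.mod_eq_of_lt hcase]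
      omega
    · have hveq : x.val + 1 = n := by omega
      obtain ⟨s, rfl⟩ : ∃ s, r = s + 1 := ⟨r - 1, by omega⟩
      have hj' : 1 + x.val + n * (s + 1 - 1) = n * s + n := by
        simp only [Nat.add_sub_cancel]
        omega
      have hsω : s + 1 < ω := by
      -- n * (s+1) < n * ω
        have hlt2 : n * (s + 1) < n * ω := by
          rw [Nat.mul_succ]
          calc n * s + n = 1 + x.val + n * (s + 1 - 1) := hj'.symm
            _ < ω * n := hlt
            _ = n * ω := Nat.mul_comm ω n
        exact Nat.lt_of_mul_lt_mul_left hlt2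
      refine Finset.mem_image.mpr ⟨⟨i, s + 2⟩, ?_, ?_⟩
      · exact Finset.mem_product.mpr ⟨hi, Finset.mem_Icc.mpr ⟨by omega, by omega⟩⟩
      · simp only [hx1, hval, hveq, Nat.mod_self]
        have hms : n * (s + 2 - 1) = n * s + n := by rw [show s + 2 - 1 = s + 1 from rfl, Nat.mul_succ]
        omega
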